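/- arXiv:1006.4400 — 2 statements merged into one kernel-verified Lean document; each statement's English description precedes it below -/
import Mathlib

section
/- Let N ≥ 3, δ = 1, K = 1 (so k_n = ⌊n log n⌋), and let the connection rates satisfy c_{k_n} = C + a N log n with C ≥ 0, a > 0 and c_{k_n} ≤ c_j ≤ c_{k_{n+1}} whenever k_n < j < k_{n+1}. If a > 1, then pre-percolation occurs in G_N. -/
open MeasureTheory ProbabilityTheory Filter

/-- The hierarchical group of order `N`: sequences with values in `{0, ..., N-1}`
(encoded as `ZMod N`), all but finitely many entries zero, with componentwise
addition mod `N`. -/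
abbrev HierGroup (N : ℕ) := ℕ →₀ ZMod N

/-- The hierarchical distance: `0` if `x = y`, and otherwise the largest index
(counted starting from `1`) where `x` and `y` differ. -/
noncomputable def hdist {N : ℕ} (x y : HierGroup N) : ℕ :=
  (x - y).support.sup fun i => i + 1

lemma hdist_comm {N : ℕ} (x y : HierGroup N) : hdist x y = hdist y x := by
  unfold hdist
  rw [← neg_sub y x, Finsupp.support_neg]

set_option linter.unusedSectionVars false
set_option maxHeartbeats 1000000

section Counting
variable {N : ℕ}

lemma hdist_zero_eq (y : HierGroup N) : hdist 0 y = y.support.sup (· + 1) := by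
  unfold hdist
  rw [zero_sub, Finsupp.support_neg]

lemma hdist_zero_le_iff {y : HierGroup N} {m : ℕ} :
    hdist 0 y ≤ m ↔ ∀ i ∈ y.support, i + 1 ≤ m := by
  rw [hdist_zero_eq]; exact Finset.sup_le_iff

noncomputable def extFun (N m : ℕ) (f : Fin m → ZMod N) : HierGroup N :=
  Finsupp.onFinset (Finset.range m) (fun i => if h : i < m then f ⟨i, h⟩ else 0)
    (fun i hi => by
      rw [Finset.mem_range]
      by_contra h
      exact hi (dif_neg h))

lemma extFun_apply (N m : ℕ) (f : Fin m → ZMod N) (i : ℕ) :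
    extFun N m f i = if h : i < m then f ⟨i, h⟩ else 0 := rfl

lemma extFun_injective (N m : ℕ) : Function.Injective (extFun N m) := by
  intro f g h
  funext i
  have := DFunLike.congr_fun h i.val
  simpa [extFun_apply, i.isLt] using this

variable [NeZero N]

noncomputable def ballFinset (N m : ℕ) [NeZero N] : Finset (HierGroup N) :=
  (Finset.univ : Finset (Fin m → ZMod N)).image (extFun N m)

lemma mem_ballFinset {m : ℕ} {y : HierGroup N} :
    y ∈ ballFinset N m ↔ hdist 0 y ≤ m := by
  constructor
  · intro hy
    rw [ballFinset, Finset.mem_image] at hy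
    obtain ⟨f, -, rfl⟩ := hy
    rw [hdist_zero_le_iff]
    intro i hi
    have h2 := Finsupp.support_onFinset_subset hi
    rw [Finset.mem_range] at h2
    omega
  · intro hy
    rw [ballFinset, Finset.mem_image]
    refine ⟨fun i => y i.val, Finset.mem_univ _, ?_⟩
    ext i
    rw [extFun_apply]
    split
    · rfl
    · rename_i h
      by_contra h0
      have : i ∈ y.support := Finsupp.mem_support_iff.mpr fun he => h0 he.symm
      have := hdist_zero_le_iff.mp hy i this
      omega

lemma card_ballFinset (m : ℕ) : (ballFinset N m).card = N ^ m := by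
  rw [ballFinset, Finset.card_image_of_injective _ (extFun_injective N m), Finset.card_univ]
  simp [ZMod.card]

lemma ballFinset_mono {j l : ℕ} (h : j ≤ l) : ballFinset N j ⊆ ballFinset N l := by
  intro y hy
  rw [mem_ballFinset] at *
  omega

noncomputable def annFinset (N j l : ℕ) [NeZero N] : Finset (HierGroup N) :=
  ballFinset N l \ ballFinset N j

lemma mem_annFinset {j l : ℕ} {y : HierGroup N} :
    y ∈ annFinset N j l ↔ j < hdist 0 y ∧ hdist 0 y ≤ l := by
  rw [annFinset, Finset.mem_sdiff, mem_ballFinset, mem_ballFinset]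
  omega

lemma card_annFinset {j l : ℕ} (h : j ≤ l) :
    (annFinset N j l).card = N ^ l - N ^ j := by
  rw [annFinset, Finset.card_sdiff_of_subset (ballFinset_mono h), card_ballFinset, card_ballFinset]

lemma mem_support_le (y : HierGroup N) : ∀ i ∈ y.support, i + 1 ≤ hdist 0 y :=
  fun i hi => hdist_zero_le_iff.mp le_rfl i hi

lemma hdist_eq_right {x y : HierGroup N} (h : hdist 0 x < hdist 0 y) :
    hdist x y = hdist 0 y := by
  have hy : y.support.Nonempty := by
    rw [Finset.nonempty_iff_ne_empty]
    intro he
    rw [hdist_zero_eq y, he] at h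
    simp at h
  obtain ⟨t, ht, hts⟩ := Finset.exists_mem_eq_sup y.support hy (· + 1)
  have hm : hdist 0 y = t + 1 := by rw [hdist_zero_eq y, hts]
  apply le_antisymm
  · have upper : ∀ i ∈ (x - y).support, i + 1 ≤ hdist 0 y := by
      intro i hi
      rw [Finsupp.mem_support_iff, Finsupp.sub_apply, sub_ne_zero] at hi
      rcases eq_or_ne (y i) 0 with h0 | h0
      · have hx0 : x i ≠ 0 := by rw [h0] at hi; exact hi
        have h1 := mem_support_le x i (Finsupp.mem_support_iff.mpr hx0)
        omega
      · exact mem_support_le y i (Finsupp.mem_support_iff.mpr h0)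
    exact (Finset.sup_le upper : _)
  · have hxt : x t = 0 := by
      by_contra h0
      have h1 := mem_support_le x t (Finsupp.mem_support_iff.mpr h0)
      omega
    have hyt : y t ≠ 0 := Finsupp.mem_support_iff.mp ht
    have hmem : t ∈ (x - y).support := by
      rw [Finsupp.mem_support_iff, Finsupp.sub_apply, hxt, zero_sub]
      exact neg_ne_zero.mpr hyt
    have h2 : t + 1 ≤ hdist x y := Finset.le_sup (f := fun i => i + 1) hmem
    omega

end Counting

section Geom
variable {N : ℕ} [NeZero N] (hN1 : 1 ≤ N)

lemma sum_ann_pow (hN1 : 1 ≤ N) (k L : ℕ) :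
    ∑ y ∈ annFinset N k (k + L), ((N : ℝ)⁻¹) ^ (2 * hdist 0 y)
      = ((N : ℝ)⁻¹) ^ (k + 1) - ((N : ℝ)⁻¹) ^ (k + L + 1) := by
  have hNR : (N : ℝ) ≠ 0 := Nat.cast_ne_zero.mpr (by omega)
  induction L with
  | zero =>
    have : annFinset N k (k + 0) = ∅ := by
      ext y; simp only [mem_annFinset, Finset.notMem_empty, iff_false]; omega
    rw [this]
    simp
  | succ L ih =>
    have hsplit : annFinset N k (k + (L + 1)) =
        annFinset N k (k + L) ∪ annFinset N (k + L) (k + L + 1) := by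
      ext y; simp only [mem_annFinset, Finset.mem_union]; omega
    have hdisj : Disjoint (annFinset N k (k + L)) (annFinset N (k + L) (k + L + 1)) := by
      rw [Finset.disjoint_left]
      intro y hy hy'
      rw [mem_annFinset] at hy hy'
      omega
    rw [hsplit, Finset.sum_union hdisj, ih]
    have hsphere : ∑ y ∈ annFinset N (k + L) (k + L + 1), ((N : ℝ)⁻¹) ^ (2 * hdist 0 y)
        = ((N : ℝ)⁻¹) ^ (k + L + 1) - ((N : ℝ)⁻¹) ^ (k + L + 1 + 1) := by
      have hval : ∀ y ∈ annFinset N (k + L) (k + L + 1),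
          ((N : ℝ)⁻¹) ^ (2 * hdist 0 y) = ((N : ℝ)⁻¹) ^ (2 * (k + L + 1)) := by
        intro y hy
        rw [mem_annFinset] at hy
        congr 2
        omega
      rw [Finset.sum_congr rfl hval, Finset.sum_const, card_annFinset (by omega),
        nsmul_eq_mul]
      have hle : N ^ (k + L) ≤ N ^ (k + L + 1) := Nat.pow_le_pow_right (by omega) (by omega)
      have hp : ∀ s t : ℕ, s ≤ t → ((N : ℝ)) ^ s * ((N : ℝ)⁻¹) ^ t = ((N : ℝ)⁻¹) ^ (t - s) := by
        intro s t hst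
        rw [show t = s + (t - s) by omega, pow_add, ← mul_assoc, ← mul_pow,
          mul_inv_cancel₀ hNR, one_pow, one_mul]
        congr 1
        omega
      rw [Nat.cast_sub hle, Nat.cast_pow, Nat.cast_pow, sub_mul,
        hp _ _ (by omega), hp _ _ (by omega)]
      congr 2 <;> omega
    rw [hsphere]
    ring
end Geom

/-- The random graph determined by an edge configuration `ω`:
`x` and `y` are adjacent iff they are distinct and the edge `s(x,y)` is open. -/
def graphOf {V : Type*} {Ω : Type*} (E : Sym2 V → Ω → Bool) (ω : Ω) : SimpleGraph V where
  Adj x y := x ≠ y ∧ E s(x, y) ω = true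
  symm := by
    constructor
    intro x y h
    refine ⟨h.1.symm, ?_⟩
    rw [Sym2.eq_swap]
    exact h.2
  loopless := ⟨fun x h => h.1 rfl⟩

/-- `x` lies in an infinite cluster (connected component) of `G`. -/
def InInfiniteCluster {V : Type*} (G : SimpleGraph V) (x : V) : Prop :=
  {y | G.Reachable x y}.Infinite

/-- `G` has exactly one infinite connected component. -/
def UniqueInfiniteCluster {V : Type*} (G : SimpleGraph V) : Prop :=
  ∃! S : Set V, (∃ x, S = {y | G.Reachable x y}) ∧ S.Infinite

/-- The edge probabilities of the hierarchical random graph `G_N`: two distinct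
points at hierarchical distance `k` are joined with probability
`min (c k / N ^ (k * (1 + δ))) 1`. -/
def EdgeProbOK (N : ℕ) (δ : ℝ) (c : ℕ → ℝ) {Ω : Type*} [MeasurableSpace Ω]
    (μ : Measure Ω) (E : Sym2 (HierGroup N) → Ω → Bool) : Prop :=
  ∀ x y : HierGroup N, x ≠ y →
    μ {ω | E s(x, y) ω = true} =
      ENNReal.ofReal (min (c (hdist x y) / (N : ℝ) ^ ((hdist x y : ℝ) * (1 + δ))) 1)

/-- The `k`-ball containing `0` in the hierarchical group. -/
def hball (N : ℕ) (k : ℕ) : Set (HierGroup N) := {y | hdist 0 y ≤ k}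

/-- The `(j, l]`-annulus around `0` in the hierarchical group. -/
def hannulus (N : ℕ) (j l : ℕ) : Set (HierGroup N) :=
  {y | j < hdist 0 y ∧ hdist 0 y ≤ l}

/-- The restriction of a graph to a set `S` of vertices: only edges with both
endpoints in `S` are kept. -/
def restrictTo {V : Type*} (G : SimpleGraph V) (S : Set V) : SimpleGraph V where
  Adj a b := G.Adj a b ∧ a ∈ S ∧ b ∈ S
  symm := ⟨fun a b h => ⟨h.1.symm, h.2.2, h.2.1⟩⟩
  loopless := ⟨fun a h => G.irrefl h.1⟩

/-- The cluster of `x` inside the `k`-ball `B_k` containing `0`, using only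
edges between points of `B_k`. -/
def clusterIn (N : ℕ) (G : SimpleGraph (HierGroup N)) (k : ℕ) (x : HierGroup N) :
    Set (HierGroup N) :=
  {y | (restrictTo G (hball N k)).Reachable x y}

/-- `S` is a largest cluster of the ball `B_k` containing `0` (in the graph `G`
restricted to `B_k`). -/
def IsLargestCluster (N : ℕ) (G : SimpleGraph (HierGroup N)) (k : ℕ)
    (S : Set (HierGroup N)) : Prop :=
  (∃ x ∈ hball N k, S = clusterIn N G k x) ∧
    ∀ x ∈ hball N k, (clusterIn N G k x).ncard ≤ S.ncard

/-- The hierarchical scales `k_n = ⌊K n log n⌋`. -/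
noncomputable def kseq (K : ℝ) (n : ℕ) : ℕ := ⌊K * n * Real.log n⌋₊

/-- Critical case `δ = 1`, `N ≥ 3`, `K = 1` (so `k_n = ⌊n log n⌋`),
`c_{k_n} = C + a N log n`, interpolation in between: if `a > 1`,
pre-percolation occurs: with probability `1` there is `n₀` such that for every
`n ≥ n₀` there is an edge between the `(k_n, k_{n+1}]`-annulus and the
`(k_{n+1}, k_{n+2}]`-annulus around `0`. -/
theorem critical_pre_percolation_of_one_lt_a
    (N : ℕ) (hN : 3 ≤ N) (C a : ℝ) (hC : 0 ≤ C) (ha : 0 < a) (ha1 : 1 < a)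
    (c : ℕ → ℝ)
    (hck : ∀ n : ℕ, 1 ≤ n → c (kseq 1 n) = C + a * N * Real.log n)
    (hmono : ∀ n : ℕ, 1 ≤ n → ∀ j : ℕ, kseq 1 n < j → j < kseq 1 (n + 1) →
      c (kseq 1 n) ≤ c j ∧ c j ≤ c (kseq 1 (n + 1)))
    (Ω : Type) [MeasurableSpace Ω] (μ : Measure Ω) [IsProbabilityMeasure μ]
    (E : Sym2 (HierGroup N) → Ω → Bool)
    (hE : ∀ e, Measurable (E e))
    (hind : iIndepFun E μ)
    (hprob : EdgeProbOK N 1 c μ E) :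
    μ {ω | ∃ n0 : ℕ, ∀ n : ℕ, n0 ≤ n →
        ∃ x ∈ hannulus N (kseq 1 n) (kseq 1 (n + 1)),
        ∃ y ∈ hannulus N (kseq 1 (n + 1)) (kseq 1 (n + 2)),
          (graphOf E ω).Adj x y} = 1 := by
  classical
  haveI hNe : NeZero N := ⟨by omega⟩
  have hN0 : (0:ℝ) < N := by positivity
  have hNR : (N:ℝ) ≠ 0 := ne_of_gt hN0
  have hN3 : (3:ℝ) ≤ N := by exact_mod_cast hN
  set a' : ℝ := (a + 1) / 2 with ha'def
  clear_value a'
  have ha'1 : 1 < a' := by rw [ha'def]; linarith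
  set ε : ℝ := (a - 1) / (4 * a) with hεdef
  clear_value ε
  have hε : 0 < ε := by rw [hεdef]; exact div_pos (by linarith) (by linarith)
  have hε1 : ε < 1 := by
    rw [hεdef, div_lt_one (by positivity)]; linarith
  obtain ⟨L0, hL0⟩ := exists_pow_lt_of_lt_one hε (by norm_num : (1:ℝ)/3 < 1)
  set L : ℕ := L0 + 1 with hLdef
  clear_value L
  have hLε : ((1:ℝ)/3) ^ L < ε := by
    refine lt_of_le_of_lt ?_ hL0
    exact pow_le_pow_of_le_one (by norm_num) (by norm_num) (by omega : L0 ≤ L)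
  obtain ⟨M, hM⟩ := exists_nat_ge (max (Real.exp (L + 1)) (max (a * N) (C + 2 * a * N)))
  set n₀ : ℕ := M + 3 with hn₀def
  clear_value n₀
  have hks : ∀ m : ℕ, kseq 1 m = ⌊(m:ℝ) * Real.log m⌋₊ := by
    intro m; rw [kseq, one_mul]
  -- generic gap estimate
  have hgap : ∀ m : ℕ, 1 ≤ m → Real.exp (L + 1) ≤ m → kseq 1 m + L < kseq 1 (m + 1) := by
    intro m hm hem
    have hmpos : (0:ℝ) < m := by exact_mod_cast (by omega : 0 < m)
    have hlogm : (L:ℝ) + 1 ≤ Real.log m := (Real.le_log_iff_exp_le hmpos).mpr hem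
    have hlogm0 : (0:ℝ) ≤ Real.log m := by
      have hL0' : (0:ℝ) ≤ (L:ℝ) := by positivity
      linarith
    have hup : (kseq 1 m : ℝ) ≤ (m:ℝ) * Real.log m := by
      rw [hks m]
      exact Nat.floor_le (by positivity)
    have hlm : Real.log m ≤ Real.log ((m:ℝ) + 1) := by
      apply Real.log_le_log hmpos; linarith
    have h1 : ((kseq 1 m + L + 1 : ℕ) : ℝ) ≤ ((m:ℝ) + 1) * Real.log ((m:ℝ) + 1) := by
      push_cast
      nlinarith [mul_le_mul_of_nonneg_left hlm (le_of_lt hmpos)]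
    have h2 : kseq 1 m + L + 1 ≤ kseq 1 (m + 1) := by
      rw [hks (m + 1)]
      apply Nat.le_floor
      push_cast
      push_cast at h1
      linarith
    omega
  -- the main estimate
  have key : ∀ n : ℕ, n₀ ≤ n →
      μ {ω | ¬ ∃ x ∈ hannulus N (kseq 1 n) (kseq 1 (n + 1)),
          ∃ y ∈ hannulus N (kseq 1 (n + 1)) (kseq 1 (n + 2)),
            (graphOf E ω).Adj x y} ≤ ENNReal.ofReal ((n:ℝ) ^ (-a')) := by
    intro n hn
    have hn3 : 3 ≤ n := by omega
    have hn1 : 1 ≤ n := by omega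
    have hnpos : (0:ℝ) < n := by exact_mod_cast (by omega : 0 < n)
    have hnM : (M:ℝ) ≤ n := by exact_mod_cast (by omega : M ≤ n)
    have hexp : Real.exp (L + 1) ≤ n := le_trans (le_trans (le_max_left _ _) hM) hnM
    have haN : a * N ≤ (n:ℝ) :=
      le_trans (le_trans (le_trans (le_max_left _ _) (le_max_right _ _)) hM) hnM
    have hCN : C + 2 * a * N ≤ (n:ℝ) :=
      le_trans (le_trans (le_trans (le_max_right _ _) (le_max_right _ _)) hM) hnM
    have hlogL : (L:ℝ) + 1 ≤ Real.log n := (Real.le_log_iff_exp_le hnpos).mpr hexp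
    have hlog0 : (0:ℝ) ≤ Real.log n := Real.log_nonneg (by exact_mod_cast hn1)
    have hlogmono : Real.log n ≤ Real.log ((n:ℝ) + 1) :=
      Real.log_le_log hnpos (by linarith)
    set k0 : ℕ := kseq 1 n with hk0def
    set k1 : ℕ := kseq 1 (n + 1) with hk1def
    set k2 : ℕ := kseq 1 (n + 2) with hk2def
    have hgap1 : k0 + L < k1 := hgap n hn1 hexp
    have hgap2 : k1 + L < k2 := by
      refine hgap (n + 1) (by omega) ?_
      push_cast
      linarith
    have hk1n : n + 1 ≤ k1 := by
      rw [hk1def, hks (n + 1)]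
      apply Nat.le_floor
      push_cast
      have hlog1 : (1:ℝ) ≤ Real.log ((n:ℝ) + 1) := by
        have := Nat.cast_nonneg (α := ℝ) L
        linarith
      nlinarith
    set cstar : ℝ := C + a * N * Real.log ((n:ℝ) + 1) with hcsdef
    clear_value cstar
    have hlogn1 : (0:ℝ) ≤ Real.log ((n:ℝ) + 1) := by linarith
    have hcstar0 : 0 ≤ cstar := by
      rw [hcsdef]
      have : 0 ≤ a * N * Real.log ((n:ℝ) + 1) := by positivity
      linarith
    have hck1 : c k1 = cstar := by
      have h := hck (n + 1) (by omega)
      rw [hk1def, hcsdef]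
      push_cast at h
      exact h
    have hck2 : c k2 = C + a * N * Real.log ((n:ℝ) + 2) := by
      have h := hck (n + 2) (by omega)
      rw [hk2def]
      push_cast at h
      exact h
    have hcm : ∀ m : ℕ, k1 < m → m ≤ k1 + L → cstar ≤ c m ∧ c m ≤ (N:ℝ) ^ (2 * m) := by
      intro m hm1 hm2
      have hmk2 : m ≤ k2 := by omega
      have hbound : cstar ≤ c m ∧ c m ≤ C + a * N * Real.log ((n:ℝ) + 2) := by
        rcases lt_or_eq_of_le hmk2 with hlt | heq
        · obtain ⟨hl, hu⟩ := hmono (n + 1) (by omega) m hm1 hlt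
          rw [hck1] at hl
          rw [hck2] at hu
          exact ⟨hl, hu⟩
        · rw [heq, hck2]
          refine ⟨?_, le_refl _⟩
          rw [hcsdef]
          have hlm : Real.log ((n:ℝ) + 1) ≤ Real.log ((n:ℝ) + 2) :=
            Real.log_le_log (by linarith) (by linarith)
          nlinarith [mul_nonneg ha.le hN0.le]
      refine ⟨hbound.1, le_trans hbound.2 ?_⟩
      have hmn : n + 2 ≤ m := by omega
      have hlog2 : Real.log ((n:ℝ) + 2) ≤ (n:ℝ) + 2 := by
        have := Real.log_le_sub_one_of_pos (by positivity : (0:ℝ) < (n:ℝ) + 2)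
        linarith
      have h1 : C + a * N * Real.log ((n:ℝ) + 2) ≤ C + a * N * ((n:ℝ) + 2) := by
        nlinarith [mul_nonneg ha.le hN0.le]
      have hn1R : (1:ℝ) ≤ (n:ℝ) := by exact_mod_cast hn1
      have h2 : C + a * N * ((n:ℝ) + 2) ≤ 2 * (n:ℝ) * (n:ℝ) := by
        nlinarith [hCN, mul_le_mul_of_nonneg_right haN hnpos.le,
          mul_le_mul_of_nonneg_right hn1R hnpos.le]
      have h3 : 2 * (n:ℝ) * (n:ℝ) ≤ (1 + 2 * (n:ℝ)) ^ 2 := by nlinarith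
      have h4 : (1 + 2 * (n:ℝ)) ≤ 3 ^ n := by
        have h := one_add_mul_le_pow (by norm_num : (-2:ℝ) ≤ 2) n
        norm_num at h
        linarith
      have h5 : (1 + 2 * (n:ℝ)) ^ 2 ≤ ((3:ℝ) ^ n) ^ 2 :=
        pow_le_pow_left₀ (by positivity) h4 2
      have h6 : ((3:ℝ) ^ n) ^ 2 = 3 ^ (2 * n) := by rw [← pow_mul, mul_comm]
      have h7 : (3:ℝ) ^ (2 * n) ≤ (3:ℝ) ^ (2 * m) :=
        pow_le_pow_right₀ (by norm_num) (by omega)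
      have h8 : (3:ℝ) ^ (2 * m) ≤ (N:ℝ) ^ (2 * m) :=
        pow_le_pow_left₀ (by norm_num) hN3 _
      rw [h6] at h5
      linarith
    -- the finite pair structure
    have hApt : ∀ x ∈ annFinset N k0 k1, k0 < hdist 0 x ∧ hdist 0 x ≤ k1 :=
      fun x hx => mem_annFinset.mp hx
    have hBpt : ∀ y ∈ annFinset N k1 (k1 + L), k1 < hdist 0 y ∧ hdist 0 y ≤ k1 + L :=
      fun y hy => mem_annFinset.mp hy
    have hsub : {ω | ¬ ∃ x ∈ hannulus N k0 k1, ∃ y ∈ hannulus N k1 k2, (graphOf E ω).Adj x y}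
        ⊆ ⋂ e ∈ (annFinset N k0 k1 ×ˢ annFinset N k1 (k1 + L)).image
            (fun p => s(p.1, p.2)), {ω | E e ω = false} := by
      intro ω hω
      simp only [Set.mem_iInter]
      intro e he
      obtain ⟨p, hp, rfl⟩ := Finset.mem_image.mp he
      rw [Finset.mem_product] at hp
      obtain ⟨h1, h2⟩ := hApt _ hp.1
      obtain ⟨h3, h4⟩ := hBpt _ hp.2
      by_contra hfalse
      have htrue : E s(p.1, p.2) ω = true := by
        cases hEe : E s(p.1, p.2) ω
        · exact absurd hEe hfalse
        · rfl
      have hne : p.1 ≠ p.2 := by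
        intro hEq
        rw [hEq] at h2
        omega
      exact hω ⟨p.1, ⟨h1, h2⟩, p.2, ⟨h3, by omega⟩, show p.1 ≠ p.2 ∧ E s(p.1, p.2) ω = true from ⟨hne, htrue⟩⟩
    have hinter : μ (⋂ e ∈ (annFinset N k0 k1 ×ˢ annFinset N k1 (k1 + L)).image
            (fun p => s(p.1, p.2)), {ω | E e ω = false})
        = ∏ e ∈ (annFinset N k0 k1 ×ˢ annFinset N k1 (k1 + L)).image
            (fun p => s(p.1, p.2)), μ {ω | E e ω = false} := by
      refine hind.meas_biInter (fun e he => ?_)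
      exact ⟨{false}, measurableSet_singleton false, rfl⟩
    have hinj : ∀ p ∈ annFinset N k0 k1 ×ˢ annFinset N k1 (k1 + L),
        ∀ q ∈ annFinset N k0 k1 ×ˢ annFinset N k1 (k1 + L),
        s(p.1, p.2) = s(q.1, q.2) → p = q := by
      intro p hp q hq hpq
      rw [Finset.mem_product] at hp hq
      rw [Sym2.eq_iff] at hpq
      rcases hpq with ⟨e1, e2⟩ | ⟨e1, e2⟩
      · exact Prod.ext e1 e2
      · exfalso
        obtain ⟨-, h2⟩ := hApt _ hp.1
        obtain ⟨h3, -⟩ := hBpt _ hq.2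
        rw [e1] at h2
        omega
    have hedge : ∀ p ∈ annFinset N k0 k1 ×ˢ annFinset N k1 (k1 + L),
        μ {ω | E s(p.1, p.2) ω = false}
          = ENNReal.ofReal (1 - c (hdist 0 p.2) / (N:ℝ) ^ (2 * hdist 0 p.2)) := by
      intro p hp
      rw [Finset.mem_product] at hp
      obtain ⟨h1, h2⟩ := hApt _ hp.1
      obtain ⟨h3, h4⟩ := hBpt _ hp.2
      have hlt : hdist 0 p.1 < hdist 0 p.2 := by omega
      have hdxy : hdist p.1 p.2 = hdist 0 p.2 := hdist_eq_right hlt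
      have hne : p.1 ≠ p.2 := by
        intro hEq
        rw [hEq] at hlt
        omega
      have hq := hprob p.1 p.2 hne
      rw [hdxy] at hq
      have hpow : (N:ℝ) ^ ((hdist 0 p.2 : ℝ) * (1 + 1)) = (N:ℝ) ^ (2 * hdist 0 p.2) := by
        rw [show ((hdist 0 p.2 : ℝ) * (1 + 1)) = ((2 * hdist 0 p.2 : ℕ) : ℝ) by push_cast; ring]
        exact Real.rpow_natCast _ _
      rw [hpow] at hq
      obtain ⟨hcl, hcu⟩ := hcm _ h3 h4
      have hNpow : (0:ℝ) < (N:ℝ) ^ (2 * hdist 0 p.2) := by positivity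
      have hqle : c (hdist 0 p.2) / (N:ℝ) ^ (2 * hdist 0 p.2) ≤ 1 := (div_le_one hNpow).mpr hcu
      have hq0 : 0 ≤ c (hdist 0 p.2) / (N:ℝ) ^ (2 * hdist 0 p.2) :=
        div_nonneg (le_trans hcstar0 hcl) hNpow.le
      rw [min_eq_left hqle] at hq
      have hcompl : {ω | E s(p.1, p.2) ω = false} = {ω | E s(p.1, p.2) ω = true}ᶜ := by
        ext ω
        simp
      have hms : MeasurableSet {ω | E s(p.1, p.2) ω = true} :=
        (hE _) (measurableSet_singleton true)
      rw [hcompl, measure_compl hms (measure_ne_top μ _), measure_univ, hq,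
        ← ENNReal.ofReal_one, ← ENNReal.ofReal_sub _ hq0]
    -- nonnegativity and bounds of the edge weights
    have hfbounds : ∀ y ∈ annFinset N k1 (k1 + L),
        0 ≤ c (hdist 0 y) / (N:ℝ) ^ (2 * hdist 0 y) ∧
        c (hdist 0 y) / (N:ℝ) ^ (2 * hdist 0 y) ≤ 1 := by
      intro y hy
      obtain ⟨h3, h4⟩ := hBpt _ hy
      obtain ⟨hcl, hcu⟩ := hcm _ h3 h4
      constructor
      · exact div_nonneg (le_trans hcstar0 hcl) (by positivity)
      · exact (div_le_one (by positivity)).mpr hcu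
    -- the sum lower bound
    have hinner : cstar * (((N:ℝ)⁻¹) ^ (k1 + 1) - ((N:ℝ)⁻¹) ^ (k1 + L + 1))
        ≤ ∑ y ∈ annFinset N k1 (k1 + L), c (hdist 0 y) / (N:ℝ) ^ (2 * hdist 0 y) := by
      rw [← sum_ann_pow (by omega : 1 ≤ N) k1 L, Finset.mul_sum]
      apply Finset.sum_le_sum
      intro y hy
      obtain ⟨h3, h4⟩ := hBpt _ hy
      obtain ⟨hcl, hcu⟩ := hcm _ h3 h4
      rw [div_eq_mul_inv, ← inv_pow]
      exact mul_le_mul_of_nonneg_right hcl (by positivity)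
    have hcard : (((annFinset N k0 k1).card : ℕ) : ℝ) = (N:ℝ) ^ k1 - (N:ℝ) ^ k0 := by
      rw [card_annFinset (by omega : k0 ≤ k1),
        Nat.cast_sub (Nat.pow_le_pow_right (by omega) (by omega)), Nat.cast_pow, Nat.cast_pow]
    -- the algebraic identity
    have hp' : ∀ s u : ℕ, (N:ℝ) ^ s * ((N:ℝ)⁻¹) ^ (s + u) = ((N:ℝ)⁻¹) ^ u := by
      intro s u
      rw [pow_add, ← mul_assoc, ← mul_pow, mul_inv_cancel₀ hNR, one_pow, one_mul]
    have hpident : ((N:ℝ) ^ k1 - (N:ℝ) ^ k0) * (((N:ℝ)⁻¹) ^ (k1 + 1) - ((N:ℝ)⁻¹) ^ (k1 + L + 1))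
        = (N:ℝ)⁻¹ * (1 - ((N:ℝ)⁻¹) ^ (k1 - k0)) * (1 - ((N:ℝ)⁻¹) ^ L) := by
      have e1 : (N:ℝ) ^ k1 * ((N:ℝ)⁻¹) ^ (k1 + 1) = (N:ℝ)⁻¹ := by
        have h := hp' k1 1; rw [pow_one] at h; exact h
      have e2 : (N:ℝ) ^ k1 * ((N:ℝ)⁻¹) ^ (k1 + L + 1) = ((N:ℝ)⁻¹) ^ (L + 1) := by
        have h := hp' k1 (L + 1)
        rw [show k1 + (L + 1) = k1 + L + 1 by omega] at h
        exact h
      have e3 : (N:ℝ) ^ k0 * ((N:ℝ)⁻¹) ^ (k1 + 1) = ((N:ℝ)⁻¹) ^ ((k1 - k0) + 1) := by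
        have h := hp' k0 ((k1 - k0) + 1)
        rw [show k0 + ((k1 - k0) + 1) = k1 + 1 by omega] at h
        exact h
      have e4 : (N:ℝ) ^ k0 * ((N:ℝ)⁻¹) ^ (k1 + L + 1) = ((N:ℝ)⁻¹) ^ ((k1 - k0) + L + 1) := by
        have h := hp' k0 ((k1 - k0) + L + 1)
        rw [show k0 + ((k1 - k0) + L + 1) = k1 + L + 1 by omega] at h
        exact h
      have expand : ((N:ℝ) ^ k1 - (N:ℝ) ^ k0) * (((N:ℝ)⁻¹) ^ (k1 + 1) - ((N:ℝ)⁻¹) ^ (k1 + L + 1))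
          = (N:ℝ)⁻¹ - ((N:ℝ)⁻¹) ^ (L + 1) - ((N:ℝ)⁻¹) ^ ((k1 - k0) + 1)
            + ((N:ℝ)⁻¹) ^ ((k1 - k0) + L + 1) := by
        rw [sub_mul, mul_sub, mul_sub, e1, e2, e3, e4]
        ring
      rw [expand]
      ring
    have hr0 : (0:ℝ) < (N:ℝ)⁻¹ := by positivity
    have hr3 : (N:ℝ)⁻¹ ≤ 1/3 := by
      rw [show (1:ℝ)/3 = 3⁻¹ by norm_num]
      exact inv_anti₀ (by norm_num) hN3
    have hr1 : (N:ℝ)⁻¹ ≤ 1 := le_trans hr3 (by norm_num)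
    have hrL : ((N:ℝ)⁻¹) ^ L < ε :=
      lt_of_le_of_lt (pow_le_pow_left₀ hr0.le hr3 L) hLε
    have hrg : ((N:ℝ)⁻¹) ^ (k1 - k0) < ε :=
      lt_of_le_of_lt (pow_le_pow_of_le_one hr0.le hr1 (by omega : L ≤ k1 - k0)) hrL
    have hcs : a * N * Real.log n ≤ cstar := by
      rw [hcsdef]
      have h := mul_le_mul_of_nonneg_left hlogmono (by positivity : (0:ℝ) ≤ a * N)
      linarith
    -- the main scalar inequality
    have hfinal : a' * Real.log n
        ≤ ((N:ℝ) ^ k1 - (N:ℝ) ^ k0)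
            * (cstar * (((N:ℝ)⁻¹) ^ (k1 + 1) - ((N:ℝ)⁻¹) ^ (k1 + L + 1))) := by
      have h0 : ((N:ℝ) ^ k1 - (N:ℝ) ^ k0)
            * (cstar * (((N:ℝ)⁻¹) ^ (k1 + 1) - ((N:ℝ)⁻¹) ^ (k1 + L + 1)))
          = cstar * ((N:ℝ)⁻¹ * (1 - ((N:ℝ)⁻¹) ^ (k1 - k0)) * (1 - ((N:ℝ)⁻¹) ^ L)) := by
        calc ((N:ℝ) ^ k1 - (N:ℝ) ^ k0)
              * (cstar * (((N:ℝ)⁻¹) ^ (k1 + 1) - ((N:ℝ)⁻¹) ^ (k1 + L + 1)))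
            = cstar * (((N:ℝ) ^ k1 - (N:ℝ) ^ k0)
                * (((N:ℝ)⁻¹) ^ (k1 + 1) - ((N:ℝ)⁻¹) ^ (k1 + L + 1))) := by ring
          _ = cstar * ((N:ℝ)⁻¹ * (1 - ((N:ℝ)⁻¹) ^ (k1 - k0)) * (1 - ((N:ℝ)⁻¹) ^ L)) := by
              rw [hpident]
      rw [h0]
      have hu0 : (0:ℝ) ≤ ((N:ℝ)⁻¹) ^ (k1 - k0) := by positivity
      have hv0 : (0:ℝ) ≤ ((N:ℝ)⁻¹) ^ L := by positivity
      have hfac : (1 - 2 * ε) ≤ (1 - ((N:ℝ)⁻¹) ^ (k1 - k0)) * (1 - ((N:ℝ)⁻¹) ^ L) := by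
        nlinarith [mul_nonneg hu0 hv0]
      have hq1 : a * Real.log n * (1 - 2 * ε)
          ≤ a * Real.log n * ((1 - ((N:ℝ)⁻¹) ^ (k1 - k0)) * (1 - ((N:ℝ)⁻¹) ^ L)) :=
        mul_le_mul_of_nonneg_left hfac (by positivity)
      have hq2 : a * Real.log n * ((1 - ((N:ℝ)⁻¹) ^ (k1 - k0)) * (1 - ((N:ℝ)⁻¹) ^ L))
          = (a * N * Real.log n)
            * ((N:ℝ)⁻¹ * (1 - ((N:ℝ)⁻¹) ^ (k1 - k0)) * (1 - ((N:ℝ)⁻¹) ^ L)) := by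
        have h : (a * N * Real.log n)
              * ((N:ℝ)⁻¹ * (1 - ((N:ℝ)⁻¹) ^ (k1 - k0)) * (1 - ((N:ℝ)⁻¹) ^ L))
            = ((N:ℝ) * (N:ℝ)⁻¹)
              * (a * Real.log n * ((1 - ((N:ℝ)⁻¹) ^ (k1 - k0)) * (1 - ((N:ℝ)⁻¹) ^ L))) := by
          ring
        rw [h, mul_inv_cancel₀ hNR, one_mul]
      have hq3 : (a * N * Real.log n)
            * ((N:ℝ)⁻¹ * (1 - ((N:ℝ)⁻¹) ^ (k1 - k0)) * (1 - ((N:ℝ)⁻¹) ^ L))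
          ≤ cstar * ((N:ℝ)⁻¹ * (1 - ((N:ℝ)⁻¹) ^ (k1 - k0)) * (1 - ((N:ℝ)⁻¹) ^ L)) := by
        apply mul_le_mul_of_nonneg_right hcs
        have h1 : (0:ℝ) ≤ 1 - ((N:ℝ)⁻¹) ^ (k1 - k0) := by linarith
        have h2 : (0:ℝ) ≤ 1 - ((N:ℝ)⁻¹) ^ L := by linarith
        positivity
      have hq4 : a' * Real.log n ≤ a * Real.log n * (1 - 2 * ε) := by
        have heq : a * (1 - 2 * ε) = a' := by
          rw [ha'def, hεdef]
          field_simp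
          ring
        calc a' * Real.log n = (a * (1 - 2 * ε)) * Real.log n := by rw [heq]
          _ = a * Real.log n * (1 - 2 * ε) := by ring
          _ ≤ a * Real.log n * (1 - 2 * ε) := le_refl _
      linarith
    have hABsum : ∑ p ∈ annFinset N k0 k1 ×ˢ annFinset N k1 (k1 + L),
          c (hdist 0 p.2) / (N:ℝ) ^ (2 * hdist 0 p.2)
        = ((annFinset N k0 k1).card : ℝ)
            * ∑ y ∈ annFinset N k1 (k1 + L), c (hdist 0 y) / (N:ℝ) ^ (2 * hdist 0 y) := by
      rw [Finset.sum_product]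
      simp only [Finset.sum_const, nsmul_eq_mul]
    have hsum : a' * Real.log n ≤ ∑ p ∈ annFinset N k0 k1 ×ˢ annFinset N k1 (k1 + L),
        c (hdist 0 p.2) / (N:ℝ) ^ (2 * hdist 0 p.2) := by
      rw [hABsum, hcard]
      refine le_trans hfinal ?_
      apply mul_le_mul_of_nonneg_left hinner
      have : (N:ℝ) ^ k0 ≤ (N:ℝ) ^ k1 := pow_le_pow_right₀ (by linarith) (by omega)
      linarith
    -- exponential bound on the product
    have hprod_exp : ∏ p ∈ annFinset N k0 k1 ×ˢ annFinset N k1 (k1 + L),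
          (1 - c (hdist 0 p.2) / (N:ℝ) ^ (2 * hdist 0 p.2))
        ≤ Real.exp (-(a' * Real.log n)) := by
      have h1 : ∏ p ∈ annFinset N k0 k1 ×ˢ annFinset N k1 (k1 + L),
            (1 - c (hdist 0 p.2) / (N:ℝ) ^ (2 * hdist 0 p.2))
          ≤ ∏ p ∈ annFinset N k0 k1 ×ˢ annFinset N k1 (k1 + L),
            Real.exp (-(c (hdist 0 p.2) / (N:ℝ) ^ (2 * hdist 0 p.2))) := by
        apply Finset.prod_le_prod
        · intro p hp
          rw [Finset.mem_product] at hp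
          have := (hfbounds _ hp.2).2
          linarith
        · intro p hp
          have := Real.add_one_le_exp (-(c (hdist 0 p.2) / (N:ℝ) ^ (2 * hdist 0 p.2)))
          linarith
      have h2 : ∏ p ∈ annFinset N k0 k1 ×ˢ annFinset N k1 (k1 + L),
            Real.exp (-(c (hdist 0 p.2) / (N:ℝ) ^ (2 * hdist 0 p.2)))
          = Real.exp (∑ p ∈ annFinset N k0 k1 ×ˢ annFinset N k1 (k1 + L),
              -(c (hdist 0 p.2) / (N:ℝ) ^ (2 * hdist 0 p.2))) := (Real.exp_sum _ _).symm
      have h3 : Real.exp (∑ p ∈ annFinset N k0 k1 ×ˢ annFinset N k1 (k1 + L),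
              -(c (hdist 0 p.2) / (N:ℝ) ^ (2 * hdist 0 p.2)))
          ≤ Real.exp (-(a' * Real.log n)) := by
        rw [Real.exp_le_exp, Finset.sum_neg_distrib]
        linarith
      linarith
    -- put everything together
    calc μ {ω | ¬ ∃ x ∈ hannulus N k0 k1, ∃ y ∈ hannulus N k1 k2, (graphOf E ω).Adj x y}
        ≤ μ (⋂ e ∈ (annFinset N k0 k1 ×ˢ annFinset N k1 (k1 + L)).image
            (fun p => s(p.1, p.2)), {ω | E e ω = false}) := measure_mono hsub
      _ = ∏ e ∈ (annFinset N k0 k1 ×ˢ annFinset N k1 (k1 + L)).image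
            (fun p => s(p.1, p.2)), μ {ω | E e ω = false} := hinter
      _ = ∏ p ∈ annFinset N k0 k1 ×ˢ annFinset N k1 (k1 + L),
            μ {ω | E s(p.1, p.2) ω = false} := Finset.prod_image hinj
      _ = ∏ p ∈ annFinset N k0 k1 ×ˢ annFinset N k1 (k1 + L),
            ENNReal.ofReal (1 - c (hdist 0 p.2) / (N:ℝ) ^ (2 * hdist 0 p.2)) :=
          Finset.prod_congr rfl hedge
      _ = ENNReal.ofReal (∏ p ∈ annFinset N k0 k1 ×ˢ annFinset N k1 (k1 + L),
            (1 - c (hdist 0 p.2) / (N:ℝ) ^ (2 * hdist 0 p.2))) := by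
          rw [ENNReal.ofReal_prod_of_nonneg]
          intro p hp
          rw [Finset.mem_product] at hp
          have := (hfbounds _ hp.2).2
          linarith
      _ ≤ ENNReal.ofReal (Real.exp (-(a' * Real.log n))) :=
          ENNReal.ofReal_le_ofReal hprod_exp
      _ = ENNReal.ofReal ((n:ℝ) ^ (-a')) := by
          rw [Real.rpow_def_of_pos hnpos]
          congr 1
          ring
  -- Borel--Cantelli and conclusion
  have htsum : (∑' (i : ℕ), μ {ω | ¬ ∃ x ∈ hannulus N (kseq 1 i) (kseq 1 (i + 1)),
      ∃ y ∈ hannulus N (kseq 1 (i + 1)) (kseq 1 (i + 2)), (graphOf E ω).Adj x y}) ≠ ⊤ := by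
    have hbnd : ∀ i : ℕ, μ {ω | ¬ ∃ x ∈ hannulus N (kseq 1 i) (kseq 1 (i + 1)),
        ∃ y ∈ hannulus N (kseq 1 (i + 1)) (kseq 1 (i + 2)), (graphOf E ω).Adj x y}
        ≤ (if i < n₀ then 1 else 0) + ENNReal.ofReal ((i:ℝ) ^ (-a')) := by
      intro i
      by_cases h : i < n₀
      · rw [if_pos h]
        exact le_trans prob_le_one le_self_add
      · rw [if_neg h, zero_add]
        exact key i (by omega)
    refine ne_top_of_le_ne_top ?_ (ENNReal.tsum_le_tsum hbnd)
    rw [ENNReal.tsum_add]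
    refine ENNReal.add_ne_top.mpr ⟨?_, ?_⟩
    · have heq : (∑' (i : ℕ), (if i < n₀ then (1:ENNReal) else 0))
          = ∑ i ∈ Finset.range n₀, (if i < n₀ then (1:ENNReal) else 0) := by
        apply tsum_eq_sum
        intro b hb
        rw [if_neg]
        simpa using hb
      rw [heq]
      exact (ENNReal.sum_lt_top.mpr (fun i _ => by split <;> simp)).ne
    · rw [← ENNReal.ofReal_tsum_of_nonneg
        (fun i => Real.rpow_nonneg (Nat.cast_nonneg i) _)
        (Real.summable_nat_rpow.mpr (by linarith : -a' < -1))]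
      exact ENNReal.ofReal_ne_top
  have hfreq : μ {ω | ∃ᶠ i in Filter.atTop, ¬ ∃ x ∈ hannulus N (kseq 1 i) (kseq 1 (i + 1)),
      ∃ y ∈ hannulus N (kseq 1 (i + 1)) (kseq 1 (i + 2)), (graphOf E ω).Adj x y} = 0 :=
    measure_setOf_frequently_eq_zero htsum
  apply le_antisymm prob_le_one
  have hcover : (Set.univ : Set Ω)
      ⊆ {ω | ∃ᶠ i in Filter.atTop, ¬ ∃ x ∈ hannulus N (kseq 1 i) (kseq 1 (i + 1)),
          ∃ y ∈ hannulus N (kseq 1 (i + 1)) (kseq 1 (i + 2)), (graphOf E ω).Adj x y}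
        ∪ {ω | ∃ n0 : ℕ, ∀ n : ℕ, n0 ≤ n →
            ∃ x ∈ hannulus N (kseq 1 n) (kseq 1 (n + 1)),
            ∃ y ∈ hannulus N (kseq 1 (n + 1)) (kseq 1 (n + 2)), (graphOf E ω).Adj x y} := by
    intro ω _
    by_cases h : ∃ᶠ i in Filter.atTop, ¬ ∃ x ∈ hannulus N (kseq 1 i) (kseq 1 (i + 1)),
        ∃ y ∈ hannulus N (kseq 1 (i + 1)) (kseq 1 (i + 2)), (graphOf E ω).Adj x y
    · exact Or.inl h
    · right
      rw [Filter.not_frequently] at h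
      obtain ⟨n0, hn0⟩ := Filter.eventually_atTop.mp h
      exact ⟨n0, fun n hn => not_not.mp (hn0 n hn)⟩
  calc (1:ENNReal) = μ Set.univ := measure_univ.symm
    _ ≤ μ ({ω | ∃ᶠ i in Filter.atTop, ¬ ∃ x ∈ hannulus N (kseq 1 i) (kseq 1 (i + 1)),
          ∃ y ∈ hannulus N (kseq 1 (i + 1)) (kseq 1 (i + 2)), (graphOf E ω).Adj x y}
        ∪ {ω | ∃ n0 : ℕ, ∀ n : ℕ, n0 ≤ n →
            ∃ x ∈ hannulus N (kseq 1 n) (kseq 1 (n + 1)),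
            ∃ y ∈ hannulus N (kseq 1 (n + 1)) (kseq 1 (n + 2)), (graphOf E ω).Adj x y}) :=
        measure_mono hcover
    _ ≤ μ {ω | ∃ᶠ i in Filter.atTop, ¬ ∃ x ∈ hannulus N (kseq 1 i) (kseq 1 (i + 1)),
          ∃ y ∈ hannulus N (kseq 1 (i + 1)) (kseq 1 (i + 2)), (graphOf E ω).Adj x y}
        + μ {ω | ∃ n0 : ℕ, ∀ n : ℕ, n0 ≤ n →
            ∃ x ∈ hannulus N (kseq 1 n) (kseq 1 (n + 1)),
            ∃ y ∈ hannulus N (kseq 1 (n + 1)) (kseq 1 (n + 2)), (graphOf E ω).Adj x y} :=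
        measure_union_le _ _
    _ = μ {ω | ∃ n0 : ℕ, ∀ n : ℕ, n0 ≤ n →
            ∃ x ∈ hannulus N (kseq 1 n) (kseq 1 (n + 1)),
            ∃ y ∈ hannulus N (kseq 1 (n + 1)) (kseq 1 (n + 2)), (graphOf E ω).Adj x y} := by
        rw [hfreq, zero_add]
end

section
/- For every a > 1 there exist constants M > 0 and L > 0 such that for all n ≥ 2, the Erdős–Rényi random graph G(n, a log n / n) satisfies P(G(n, a log n / n) is not connected) ≤ M [ (log n)^{13} n^{1−a} + n^{−1} + exp(−L (log n)^{13} n²) ]. -/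
open MeasureTheory ProbabilityTheory Filter

lemma g_max {p x y : ℝ} (hp : 0 < p) (hx : 1 ≤ x) (hxy : x ≤ y) :
    p * x - Real.log x ≤ max (p * 1 - Real.log 1) (p * y - Real.log y) := by
  have hx0 : 0 < x := lt_of_lt_of_le one_pos hx
  rcases le_total (p * x) 1 with h | h
  · refine le_max_of_le_left ?_
    rw [Real.log_one]
    have hpx : p ≤ 1 / x := (le_div_iff₀ hx0).mpr h
    have h1 : p * (x - 1) ≤ (1 / x) * (x - 1) :=
      mul_le_mul_of_nonneg_right hpx (by linarith)
    have h2 : 1 - 1 / x ≤ Real.log x := by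
      have := Real.log_le_sub_one_of_pos (x := x⁻¹) (by positivity)
      rw [Real.log_inv] at this
      rw [one_div]; linarith
    have h3 : (1 / x) * (x - 1) = 1 - 1 / x := by field_simp
    nlinarith
  · refine le_max_of_le_right ?_
    have hy0 : 0 < y := lt_of_lt_of_le hx0 hxy
    have h2 : Real.log y - Real.log x ≤ y / x - 1 := by
      have := Real.log_le_sub_one_of_pos (x := y / x) (by positivity)
      rwa [Real.log_div (ne_of_gt hy0) (ne_of_gt hx0)] at this
    have h3 : y / x - 1 = (1 / x) * (y - x) := by field_simp
    have hpx : 1 / x ≤ p := (div_le_iff₀ hx0).mpr h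
    have h4 : (1 / x) * (y - x) ≤ p * (y - x) :=
      mul_le_mul_of_nonneg_right hpx (by linarith)
    linarith

lemma term_bound {n k : ℕ} (hk : 1 ≤ k) (hkn : k ≤ n) {p : ℝ} (hp0 : 0 ≤ p) (hp1 : p ≤ 1) :
    (n.choose k : ℝ) * (1 - p) ^ (k * (n - k)) ≤
      Real.exp ((k : ℝ) * (1 + Real.log n - Real.log k - p * ((n : ℝ) - k))) := by
  have hn1 : 1 ≤ n := le_trans hk hkn
  have hk0 : (0:ℝ) < k := by exact_mod_cast hk
  have hn0 : (0:ℝ) < n := by exact_mod_cast lt_of_lt_of_le one_pos hn1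
  -- choose bound
  have hA : (k.factorial : ℝ) * (n.choose k : ℝ) ≤ (n:ℝ) ^ k := by
    have := Nat.descFactorial_le_pow n k
    rw [Nat.descFactorial_eq_factorial_mul_choose] at this
    exact_mod_cast this
  have hB : (k:ℝ) ^ k ≤ Real.exp k * (k.factorial : ℝ) := by
    have := Real.pow_div_factorial_le_exp (x := (k:ℝ)) (le_of_lt hk0) k
    rw [div_le_iff₀ (by positivity)] at this
    linarith [this]
  have hchoose : (n.choose k : ℝ) * (k:ℝ)^k ≤ (n:ℝ)^k * Real.exp k := by
    calc (n.choose k : ℝ) * (k:ℝ)^k ≤ (n.choose k : ℝ) * (Real.exp k * (k.factorial:ℝ)) :=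
          mul_le_mul_of_nonneg_left hB (by positivity)
      _ = ((k.factorial:ℝ) * (n.choose k:ℝ)) * Real.exp k := by ring
      _ ≤ (n:ℝ)^k * Real.exp k := mul_le_mul_of_nonneg_right hA (le_of_lt (Real.exp_pos _))
  have hchoose' : (n.choose k : ℝ) ≤ (n:ℝ)^k * Real.exp k / (k:ℝ)^k := by
    rw [le_div_iff₀ (by positivity)]; exact hchoose
  -- pow bound
  have hm : ((k * (n - k) : ℕ) : ℝ) = (k:ℝ) * ((n:ℝ) - k) := by
    push_cast [Nat.cast_sub hkn]; ring
  have hpow : (1 - p) ^ (k * (n - k)) ≤ Real.exp (-(p * ((k:ℝ) * ((n:ℝ) - k)))) := by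
    have h1 : (1 - p) ≤ Real.exp (-p) := by
      have := Real.add_one_le_exp (-p); linarith
    calc (1 - p) ^ (k * (n - k)) ≤ (Real.exp (-p)) ^ (k * (n - k)) :=
          pow_le_pow_left₀ (by linarith) h1 _
      _ = Real.exp (((k * (n - k) : ℕ):ℝ) * (-p)) := by rw [← Real.exp_nat_mul]
      _ = Real.exp (-(p * ((k:ℝ) * ((n:ℝ) - k)))) := by rw [hm]; ring_nf
  -- combine
  have hnpow : (n:ℝ)^k = Real.exp ((k:ℝ) * Real.log n) := by
    rw [Real.exp_nat_mul, Real.exp_log hn0]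
  have hkpow : (k:ℝ)^k = Real.exp ((k:ℝ) * Real.log k) := by
    rw [Real.exp_nat_mul, Real.exp_log hk0]
  calc (n.choose k : ℝ) * (1 - p) ^ (k * (n - k))
      ≤ ((n:ℝ)^k * Real.exp k / (k:ℝ)^k) * Real.exp (-(p * ((k:ℝ) * ((n:ℝ) - k)))) := by
        exact mul_le_mul hchoose' hpow (pow_nonneg (by linarith) _) (by positivity)
    _ = Real.exp ((k : ℝ) * (1 + Real.log n - Real.log k - p * ((n : ℝ) - k))) := by
        rw [hnpow, hkpow, ← Real.exp_add, ← Real.exp_sub, ← Real.exp_add]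
        ring_nf

set_option maxHeartbeats 1000000 in
lemma sum_bound (a : ℝ) (ha : 1 < a) :
    ∃ N0 : ℕ, 0 < N0 ∧ ∀ n : ℕ, N0 ≤ n →
      ∑ k ∈ Finset.Icc 1 (n / 2), (n.choose k : ℝ) * (1 - a * Real.log n / n) ^ (k * (n - k)) ≤
        (2 * Real.exp (1 + a) + 8 * Real.exp 1) * ((n : ℝ) ^ (1 - a) + (n : ℝ)⁻¹) := by
  -- eventually conditions
  have hc2 : Tendsto (fun n : ℕ => Real.exp (1 + a) * (n : ℝ) ^ (1 - a)) atTop (nhds 0) := by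
    have h0 : Tendsto (fun x : ℝ => x ^ (-(a - 1))) atTop (nhds 0) :=
      tendsto_rpow_neg_atTop (by linarith)
    have h1 : Tendsto (fun n : ℕ => ((n : ℝ)) ^ (1 - a)) atTop (nhds 0) := by
      have := h0.comp tendsto_natCast_atTop_atTop (α := ℕ)
      simpa [Function.comp_def, show -(a - 1) = 1 - a by ring] using this
    simpa using h1.const_mul (Real.exp (1 + a))
  have hc3 : Tendsto (fun n : ℕ => 4 * Real.exp 1 * (n : ℝ) ^ (-(a / 2))) atTop (nhds 0) := by
    have h0 : Tendsto (fun x : ℝ => x ^ (-(a / 2))) atTop (nhds 0) :=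
      tendsto_rpow_neg_atTop (by linarith)
    have h1 := h0.comp tendsto_natCast_atTop_atTop (α := ℕ)
    simpa [Function.comp] using h1.const_mul (4 * Real.exp 1)
  have hc4 : Tendsto (fun n : ℕ => a * (Real.log n / n)) atTop (nhds 0) := by
    have h0 : Tendsto (fun x : ℝ => Real.log x / x) atTop (nhds 0) :=
      Real.isLittleO_log_id_atTop.tendsto_div_nhds_zero
    have h1 := h0.comp tendsto_natCast_atTop_atTop (α := ℕ)
    simpa using h1.const_mul a
  have hev : ∀ᶠ n : ℕ in atTop, 4 ≤ n ∧
      Real.exp (1 + a) * (n : ℝ) ^ (1 - a) ≤ 1 / 2 ∧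
      4 * Real.exp 1 * (n : ℝ) ^ (-(a / 2)) ≤ 1 / 2 ∧
      a * (Real.log n / n) ≤ 1 := by
    filter_upwards [eventually_ge_atTop 4,
      hc2.eventually_le_const (by norm_num : (0:ℝ) < 1/2),
      hc3.eventually_le_const (by norm_num : (0:ℝ) < 1/2),
      hc4.eventually_le_const (by norm_num : (0:ℝ) < 1)] with n h1 h2 h3 h4
    exact ⟨h1, h2, h3, h4⟩
  obtain ⟨N0, hN0⟩ := eventually_atTop.mp hev
  refine ⟨max N0 1, by positivity, fun n hn => ?_⟩
  obtain ⟨h4n, hc2', hc3', hc4'⟩ := hN0 n (le_trans (le_max_left _ _) hn)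

  -- setup
  have hn4 : 4 ≤ n := h4n
  have hn0 : (0:ℝ) < n := by exact_mod_cast Nat.lt_of_lt_of_le (by norm_num) hn4
  have hn1 : (1:ℝ) < n := by exact_mod_cast Nat.lt_of_lt_of_le (by norm_num) hn4
  set Ln := Real.log n with hLdef
  have hL0 : 0 < Ln := Real.log_pos hn1
  set p := a * Ln / n with hpdef
  have ha0 : 0 < a := by linarith
  have hp0 : 0 < p := by positivity
  have hp1 : p ≤ 1 := by
    have : p = a * (Ln / n) := by rw [hpdef]; ring
    rw [this]; exact hc4'
  set K := n / 2 with hKdef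
  have hK1 : 1 ≤ K := by omega
  have hKn : K ≤ n := Nat.div_le_self _ _
  have hKr1 : (1:ℝ) ≤ (K:ℝ) := by exact_mod_cast hK1
  have hKr_le : (K:ℝ) ≤ (n:ℝ) / 2 := by
    have := Nat.cast_div_le (m := n) (n := 2) (α := ℝ)
    simpa using this
  have hKr_ge : (n:ℝ) / 4 ≤ (K:ℝ) := by
    have h4K : n ≤ 4 * K := by omega
    have : (n:ℝ) ≤ 4 * (K:ℝ) := by exact_mod_cast h4K
    linarith
  have hpn : p * n = a * Ln := by
    rw [hpdef]; field_simp
  -- the two endpoint bounds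
  set A := 1 + Ln - p * n + (p * 1 - Real.log 1) with hAdef
  set B := 1 + Ln - p * n + (p * (K:ℝ) - Real.log (K:ℝ)) with hBdef
  have hpa : p ≤ a := by
    have hLn : Ln ≤ n := by
      have := Real.log_le_sub_one_of_pos hn0
      rw [← hLdef] at this; linarith
    rw [hpdef, div_le_iff₀ hn0]
    nlinarith
  have hexpA : Real.exp A ≤ Real.exp (1 + a) * (n:ℝ) ^ (1 - a) := by
    have hA_le : A ≤ (1 + a) + (1 - a) * Ln := by
      rw [hAdef, Real.log_one, hpn]; nlinarith
    calc Real.exp A ≤ Real.exp ((1 + a) + (1 - a) * Ln) := Real.exp_le_exp.mpr hA_le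
      _ = Real.exp (1 + a) * (n:ℝ) ^ (1 - a) := by
          rw [Real.exp_add, Real.rpow_def_of_pos hn0, ← hLdef, mul_comm (1 - a) Ln]
  have hexpB : Real.exp B ≤ 4 * Real.exp 1 * (n:ℝ) ^ (-(a / 2)) := by
    have hlogK : Ln - Real.log 4 ≤ Real.log (K:ℝ) := by
      have h1 : Real.log ((n:ℝ) / 4) ≤ Real.log (K:ℝ) :=
        Real.log_le_log (by positivity) hKr_ge
      rw [Real.log_div (ne_of_gt hn0) (by norm_num), ← hLdef] at h1
      exact h1
    have hpK : p * (K:ℝ) ≤ a * Ln / 2 := by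
      have := mul_le_mul_of_nonneg_left hKr_le (le_of_lt hp0)
      have h2 : p * ((n:ℝ) / 2) = a * Ln / 2 := by
        field_simp at hpn ⊢; linarith [hpn]
      linarith
    have hB_le : B ≤ (1 + Real.log 4) + (-(a / 2)) * Ln := by
      rw [hBdef, hpn]; nlinarith
    calc Real.exp B ≤ Real.exp ((1 + Real.log 4) + (-(a / 2)) * Ln) := Real.exp_le_exp.mpr hB_le
      _ = 4 * Real.exp 1 * (n:ℝ) ^ (-(a / 2)) := by
          rw [Real.exp_add, Real.exp_add, Real.exp_log (by norm_num : (0:ℝ) < 4),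
            Real.rpow_def_of_pos hn0, ← hLdef, mul_comm (-(a / 2)) Ln]
          ring
  set r := Real.exp (max A B) with hrdef
  have hr0 : 0 ≤ r := le_of_lt (Real.exp_pos _)
  have hr_half : r ≤ 1 / 2 := by
    rcases max_cases A B with ⟨h, _⟩ | ⟨h, _⟩ <;> rw [hrdef, h]
    · exact le_trans hexpA hc2'
    · exact le_trans hexpB hc3'
  have hr_est : r ≤ Real.exp (1 + a) * (n:ℝ) ^ (1 - a) + 4 * Real.exp 1 * (n:ℝ) ^ (-(a / 2)) := by
    rcases max_cases A B with ⟨h, _⟩ | ⟨h, _⟩ <;> rw [hrdef, h]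
    · have : (0:ℝ) ≤ 4 * Real.exp 1 * (n:ℝ) ^ (-(a / 2)) := by positivity
      linarith
    · have : (0:ℝ) ≤ Real.exp (1 + a) * (n:ℝ) ^ (1 - a) := by positivity
      linarith
  -- termwise bound
  have hterm : ∀ k ∈ Finset.Icc 1 K, (n.choose k : ℝ) * (1 - p) ^ (k * (n - k)) ≤ r ^ k := by
    intro k hk
    rw [Finset.mem_Icc] at hk
    obtain ⟨hk1, hkK⟩ := hk
    have hkn : k ≤ n := le_trans hkK hKn
    have hkr1 : (1:ℝ) ≤ (k:ℝ) := by exact_mod_cast hk1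
    have hkrK : (k:ℝ) ≤ (K:ℝ) := by exact_mod_cast hkK
    have h1 := term_bound hk1 hkn (le_of_lt hp0) hp1
    have h2 : (k:ℝ) * (1 + Real.log n - Real.log k - p * ((n:ℝ) - k)) ≤ (k:ℝ) * max A B := by
      apply mul_le_mul_of_nonneg_left _ (by positivity)
      have hg := g_max hp0 hkr1 hkrK
      have heq : 1 + Real.log n - Real.log k - p * ((n:ℝ) - k)
          = (1 + Ln - p * n) + (p * (k:ℝ) - Real.log (k:ℝ)) := by rw [← hLdef]; ring
      rw [heq, hAdef, hBdef]
      rcases le_max_iff.mp hg with h | h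
      · exact le_max_of_le_left (by linarith)
      · exact le_max_of_le_right (by linarith)
    calc (n.choose k : ℝ) * (1 - p) ^ (k * (n - k))
        ≤ Real.exp ((k:ℝ) * (1 + Real.log n - Real.log k - p * ((n:ℝ) - k))) := h1
      _ ≤ Real.exp ((k:ℝ) * max A B) := Real.exp_le_exp.mpr h2
      _ = r ^ k := by rw [hrdef, ← Real.exp_nat_mul]
  -- sum the geometric series
  have hsum : ∑ k ∈ Finset.Icc 1 K, (n.choose k : ℝ) * (1 - p) ^ (k * (n - k)) ≤ 2 * r := by
    calc ∑ k ∈ Finset.Icc 1 K, (n.choose k : ℝ) * (1 - p) ^ (k * (n - k))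
        ≤ ∑ k ∈ Finset.Icc 1 K, r ^ k := Finset.sum_le_sum hterm
      _ = ∑ i ∈ Finset.range (K + 1 - 1), r ^ (1 + i) := by
          rw [← Finset.Ico_add_one_right_eq_Icc, Finset.sum_Ico_eq_sum_range]
      _ ≤ ∑ i ∈ Finset.range (K + 1 - 1), r * (1 / 2) ^ i := by
          apply Finset.sum_le_sum
          intro i _
          rw [pow_add, pow_one]
          exact mul_le_mul_of_nonneg_left (pow_le_pow_left₀ hr0 hr_half i) hr0
      _ = r * ∑ i ∈ Finset.range (K + 1 - 1), (1 / 2 : ℝ) ^ i := by rw [Finset.mul_sum]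
      _ ≤ r * 2 := mul_le_mul_of_nonneg_left (sum_geometric_two_le _) hr0
      _ = 2 * r := by ring
  -- final comparison
  have hpow_split : (n:ℝ) ^ (-(a / 2)) ≤ (n:ℝ) ^ (1 - a) + (n:ℝ)⁻¹ := by
    rcases le_total a 2 with h | h
    · have : (n:ℝ) ^ (-(a / 2)) ≤ (n:ℝ) ^ (1 - a) :=
        Real.rpow_le_rpow_of_exponent_le (le_of_lt hn1) (by linarith)
      have hinv : (0:ℝ) ≤ (n:ℝ)⁻¹ := by positivity
      linarith
    · have h1 : (n:ℝ) ^ (-(a / 2)) ≤ (n:ℝ) ^ (-1 : ℝ) :=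
        Real.rpow_le_rpow_of_exponent_le (le_of_lt hn1) (by linarith)
      rw [Real.rpow_neg_one] at h1
      have hnn : (0:ℝ) ≤ (n:ℝ) ^ (1 - a) := by positivity
      linarith
  have he1 : (0:ℝ) < Real.exp (1 + a) := Real.exp_pos _
  have he2 : (0:ℝ) < Real.exp 1 := Real.exp_pos _
  have hA0 : (0:ℝ) ≤ (n:ℝ) ^ (1 - a) := by positivity
  have hI0 : (0:ℝ) ≤ (n:ℝ)⁻¹ := by positivity
  calc ∑ k ∈ Finset.Icc 1 K, (n.choose k : ℝ) * (1 - p) ^ (k * (n - k))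
      ≤ 2 * r := hsum
    _ ≤ 2 * (Real.exp (1 + a) * (n:ℝ) ^ (1 - a) + 4 * Real.exp 1 * (n:ℝ) ^ (-(a / 2))) := by
        linarith
    _ ≤ (2 * Real.exp (1 + a) + 8 * Real.exp 1) * ((n : ℝ) ^ (1 - a) + (n : ℝ)⁻¹) := by
        nlinarith [mul_le_mul_of_nonneg_left hpow_split (by positivity : (0:ℝ) ≤ 8 * Real.exp 1)]

set_option maxHeartbeats 2000000 in
/-- Connectivity of the Erdős–Rényi random graph `G(n, a log n / n)` for
`a > 1`: there are constants `M, L > 0` such that for all `n ≥ 2`,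
`P(G(n, a log n / n)` is not connected `) ≤
M [(log n)^13 n^{1-a} + n^{-1} + exp (-L (log n)^13 n²)]`. -/
theorem erdos_renyi_not_connected_bound (a : ℝ) (ha : 1 < a) :
    ∃ M L : ℝ, 0 < M ∧ 0 < L ∧
      ∀ n : ℕ, 2 ≤ n →
      ∀ (Ω : Type) [MeasurableSpace Ω] (μ : Measure Ω) [IsProbabilityMeasure μ]
        (E : Sym2 (Fin n) → Ω → Bool),
        (∀ e, Measurable (E e)) →
        iIndepFun E μ →
        (∀ i j : Fin n, i ≠ j →
          μ {ω | E s(i, j) ω = true} = ENNReal.ofReal (a * Real.log n / n)) →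
        μ {ω | ¬ (graphOf E ω).Connected} ≤
          ENNReal.ofReal (M * ((Real.log n) ^ 13 * (n : ℝ) ^ (1 - a) +
            (n : ℝ)⁻¹ + Real.exp (-L * (Real.log n) ^ 13 * (n : ℝ) ^ 2))) := by
  classical
  obtain ⟨N0, hN0pos, hN0⟩ := sum_bound a ha
  set B : ℝ := 2 * Real.exp (1 + a) + 8 * Real.exp 1 with hB
  have hBpos : 0 < B := by positivity
  have hl2 : (0:ℝ) < Real.log 2 := Real.log_pos (by norm_num)
  refine ⟨(N0 : ℝ) + B * ((Real.log 2) ^ 13)⁻¹ + B, 1, by positivity, one_pos, ?_⟩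
  set M : ℝ := (N0 : ℝ) + B * ((Real.log 2) ^ 13)⁻¹ + B with hM
  have hMpos : 0 < M := by positivity
  intro n hn Ω _ μ _ E hE hind hprob
  have hn0 : (0:ℝ) < n := by exact_mod_cast Nat.lt_of_lt_of_le (by norm_num) hn
  have hn1 : (1:ℝ) < n := by exact_mod_cast Nat.lt_of_lt_of_le (by norm_num) hn
  have hlogn : 0 < Real.log n := Real.log_pos hn1
  set T1 : ℝ := (Real.log n) ^ 13 * (n : ℝ) ^ (1 - a) with hT1
  set T2 : ℝ := (n : ℝ)⁻¹ with hT2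
  set T3 : ℝ := Real.exp (-(1:ℝ) * (Real.log n) ^ 13 * (n : ℝ) ^ 2) with hT3
  have hT1nn : 0 ≤ T1 := by positivity
  have hT2nn : 0 < T2 := by positivity
  have hT3nn : 0 < T3 := Real.exp_pos _
  set p : ℝ := a * Real.log n / n with hp
  have hp0 : 0 ≤ p := by positivity
  -- p ≤ 1 from the probability hypothesis
  have hp1 : p ≤ 1 := by
    have h01 : (⟨0, by omega⟩ : Fin n) ≠ ⟨1, by omega⟩ :=
      Fin.ne_of_val_ne (by norm_num)
    have h := hprob ⟨0, by omega⟩ ⟨1, by omega⟩ h01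
    have hle : ENNReal.ofReal p ≤ 1 := by
      rw [← h]; exact prob_le_one
    exact ENNReal.ofReal_le_one.mp hle
  rcases lt_or_ge n N0 with hsmall | hbig
  · -- small n : trivial bound by 1
    refine le_trans prob_le_one ?_
    rw [← ENNReal.ofReal_one]
    apply ENNReal.ofReal_le_ofReal
    have hMn : (n : ℝ) ≤ M := by
      have h0 : (n : ℝ) ≤ (N0 : ℝ) := by exact_mod_cast hsmall.le
      have h1 : 0 < B * ((Real.log 2) ^ 13)⁻¹ := by positivity
      rw [hM]; linarith
    have h2 : 1 ≤ M * T2 := by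
      rw [hT2]
      calc (1:ℝ) = (n : ℝ) * (n : ℝ)⁻¹ := by field_simp
        _ ≤ M * (n : ℝ)⁻¹ := mul_le_mul_of_nonneg_right hMn (by positivity)
    nlinarith [mul_nonneg hMpos.le hT1nn, mul_pos hMpos hT3nn]
  · -- large n : the real estimate
    set 𝒮 : Finset (Finset (Fin n)) :=
      Finset.univ.filter (fun S : Finset (Fin n) => S.Nonempty ∧ 2 * S.card ≤ n) with h𝒮
    set Aev : Finset (Fin n) → Set Ω :=
      (fun S => {ω | ∀ i ∈ S, ∀ j ∈ Sᶜ, E s(i, j) ω = false}) with hAev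
    -- union bound inclusion
    have hsub : {ω | ¬ (graphOf E ω).Connected} ⊆ ⋃ S ∈ 𝒮, Aev S := by
      intro ω hω
      simp only [Set.mem_setOf_eq] at hω
      have hne : Nonempty (Fin n) := ⟨⟨0, by omega⟩⟩
      have hpre : ¬ (graphOf E ω).Preconnected := by
        intro h; exact hω ((SimpleGraph.connected_iff (G := graphOf E ω)).mpr ⟨h, hne⟩)
      rw [SimpleGraph.Preconnected] at hpre
      push_neg at hpre
      obtain ⟨x, y, hxy⟩ := hpre
      set C : Finset (Fin n) :=
        Finset.univ.filter (fun z => (graphOf E ω).Reachable x z) with hC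
      have hxC : x ∈ C := by
        rw [hC, Finset.mem_filter]; exact ⟨Finset.mem_univ _, SimpleGraph.Reachable.refl x⟩
      have hyC : y ∉ C := by
        rw [hC, Finset.mem_filter]; rintro ⟨-, h⟩; exact hxy h
      have hkey : ∀ i ∈ C, ∀ j ∉ C, E s(i, j) ω = false := by
        intro i hi j hj
        by_contra hne'
        have htrue : E s(i, j) ω = true := by
          rcases Bool.eq_false_or_eq_true (E s(i, j) ω) with h | h
          · exact h
          · exact absurd h hne'
        have hij : i ≠ j := fun h => hj (h ▸ hi)
        have hadj : (graphOf E ω).Adj i j := ⟨hij, htrue⟩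
        rw [hC, Finset.mem_filter] at hi
        refine hj ?_
        rw [hC, Finset.mem_filter]
        exact ⟨Finset.mem_univ _, hi.2.trans hadj.reachable⟩
      have hCcard : C.card + Cᶜ.card = n := by
        have := Finset.card_compl C (α := Fin n)
        have hle : C.card ≤ n := by
          have := Finset.card_le_univ C
          simpa using this
        rw [this, Fintype.card_fin]; omega
      rcases le_or_gt (2 * C.card) n with hle | hgt
      · refine Set.mem_biUnion (show C ∈ 𝒮 from ?_) ?_
        · rw [h𝒮, Finset.mem_filter]
          exact ⟨Finset.mem_univ _, ⟨x, hxC⟩, hle⟩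
        · intro i hi j hj
          exact hkey i hi j (Finset.mem_compl.mp hj)
      · refine Set.mem_biUnion (show Cᶜ ∈ 𝒮 from ?_) ?_
        · rw [h𝒮, Finset.mem_filter]
          exact ⟨Finset.mem_univ _, ⟨y, Finset.mem_compl.mpr hyC⟩, by omega⟩
        · intro i hi j hj
          have hiC : i ∉ C := Finset.mem_compl.mp hi
          have hjC : j ∈ C := by simpa using hj
          have := hkey j hjC i hiC
          rwa [Sym2.eq_swap] at this
    -- measure of each event
    have hAeq : ∀ S : Finset (Fin n),
        μ (Aev S) = (1 - ENNReal.ofReal p) ^ (S.card * (n - S.card)) := by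
      intro S
      set F : Finset (Sym2 (Fin n)) := (S ×ˢ Sᶜ).image (fun q => s(q.1, q.2)) with hF
      have hAinter : Aev S = ⋂ e ∈ F, {ω | E e ω = false} := by
        ext ω
        simp only [hAev, Set.mem_setOf_eq, Set.mem_iInter, hF, Finset.mem_image,
          Finset.mem_product]
        constructor
        · rintro h e ⟨⟨i, j⟩, ⟨hi, hj⟩, rfl⟩
          exact h i hi j hj
        · intro h i hi j hj
          exact h s(i, j) ⟨(i, j), ⟨hi, hj⟩, rfl⟩
      have hmeas := hind.meas_biInter (S := F) (s := fun e => {ω | E e ω = false})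
        (fun e _ => MeasurableSpace.measurableSet_comap.mpr
          ⟨{false}, measurableSet_singleton false, rfl⟩)
      have hfac : ∀ e ∈ F, μ {ω | E e ω = false} = 1 - ENNReal.ofReal p := by
        intro e he
        rw [hF, Finset.mem_image] at he
        obtain ⟨⟨i, j⟩, hq, rfl⟩ := he
        rw [Finset.mem_product] at hq
        have hij : i ≠ j := fun h => (Finset.mem_compl.mp hq.2) (h ▸ hq.1)
        have hcompl : {ω | E s(i, j) ω = false} = {ω | E s(i, j) ω = true}ᶜ := by
          ext ω
          simp [Bool.not_eq_true]
        have hms : MeasurableSet {ω | E s(i, j) ω = true} :=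
          hE s(i, j) (measurableSet_singleton true)
        rw [hcompl, prob_compl_eq_one_sub hms, hprob i j hij]
      rw [hAinter, hmeas, Finset.prod_congr rfl hfac, Finset.prod_const]
      congr 1
      rw [hF]
      rw [Finset.card_image_of_injOn, Finset.card_product, Finset.card_compl,
        Fintype.card_fin]
      rintro ⟨i, j⟩ hq ⟨i', j'⟩ hq' heq
      simp only [Finset.mem_coe, Finset.mem_product] at hq hq'
      dsimp only at heq
      rcases Sym2.eq_iff.mp heq with ⟨h1, h2⟩ | ⟨h1, h2⟩
      · exact Prod.ext h1 h2
      · exact absurd (h1 ▸ hq.1 : j' ∈ S) (Finset.mem_compl.mp hq'.2)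
    -- sum over sets, grouped by cardinality
    have hchain : μ {ω | ¬ (graphOf E ω).Connected} ≤
        ∑ k ∈ Finset.Icc 1 (n / 2),
          (n.choose k : ENNReal) * (1 - ENNReal.ofReal p) ^ (k * (n - k)) := by
      have hmap : ∀ S ∈ 𝒮, S.card ∈ Finset.Icc 1 (n / 2) := by
        intro S hS
        rw [h𝒮, Finset.mem_filter] at hS
        rw [Finset.mem_Icc]
        refine ⟨hS.2.1.card_pos, ?_⟩
        rw [Nat.le_div_iff_mul_le (by norm_num : 0 < 2)]
        omega
      calc μ {ω | ¬ (graphOf E ω).Connected} ≤ μ (⋃ S ∈ 𝒮, Aev S) := measure_mono hsub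
        _ ≤ ∑ S ∈ 𝒮, μ (Aev S) := measure_biUnion_finset_le _ _
        _ = ∑ S ∈ 𝒮, (1 - ENNReal.ofReal p) ^ (S.card * (n - S.card)) :=
            Finset.sum_congr rfl (fun S _ => hAeq S)
        _ = ∑ k ∈ Finset.Icc 1 (n / 2), ∑ S ∈ 𝒮.filter (fun S => S.card = k),
              (1 - ENNReal.ofReal p) ^ (S.card * (n - S.card)) :=
            (Finset.sum_fiberwise_of_maps_to hmap _).symm
        _ ≤ ∑ k ∈ Finset.Icc 1 (n / 2),
              (n.choose k : ENNReal) * (1 - ENNReal.ofReal p) ^ (k * (n - k)) := by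
            apply Finset.sum_le_sum
            intro k _
            have hcongr : ∀ S ∈ 𝒮.filter (fun S => S.card = k),
                (1 - ENNReal.ofReal p) ^ (S.card * (n - S.card))
                  = (1 - ENNReal.ofReal p) ^ (k * (n - k)) := by
              intro S hS
              rw [(Finset.mem_filter.mp hS).2]
            rw [Finset.sum_congr rfl hcongr, Finset.sum_const, nsmul_eq_mul]
            apply mul_le_mul_left
            have hsubset : 𝒮.filter (fun S => S.card = k) ⊆ Finset.univ.powersetCard k := by
              intro S hS
              exact Finset.mem_powersetCard_univ.mpr (Finset.mem_filter.mp hS).2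
            have hcard := Finset.card_le_card hsubset
            rw [Finset.card_powersetCard, Finset.card_univ, Fintype.card_fin] at hcard
            exact_mod_cast hcard
    -- convert to a real sum
    have hconv : ∀ k ∈ Finset.Icc 1 (n / 2),
        (n.choose k : ENNReal) * (1 - ENNReal.ofReal p) ^ (k * (n - k))
          = ENNReal.ofReal ((n.choose k : ℝ) * (1 - p) ^ (k * (n - k))) := by
      intro k _
      rw [← ENNReal.ofReal_one, ← ENNReal.ofReal_sub 1 hp0,
        ← ENNReal.ofReal_pow (by linarith : (0:ℝ) ≤ 1 - p),
        ← ENNReal.ofReal_natCast (n.choose k),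
        ← ENNReal.ofReal_mul (by positivity)]
    have hreal := hN0 n hbig
    calc μ {ω | ¬ (graphOf E ω).Connected}
        ≤ ∑ k ∈ Finset.Icc 1 (n / 2),
            (n.choose k : ENNReal) * (1 - ENNReal.ofReal p) ^ (k * (n - k)) := hchain
      _ = ENNReal.ofReal (∑ k ∈ Finset.Icc 1 (n / 2),
            (n.choose k : ℝ) * (1 - p) ^ (k * (n - k))) := by
          rw [Finset.sum_congr rfl hconv, ← ENNReal.ofReal_sum_of_nonneg]
          intro k _
          exact mul_nonneg (Nat.cast_nonneg _) (pow_nonneg (by linarith) _)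
      _ ≤ ENNReal.ofReal (M * (T1 + T2 + T3)) := by
          apply ENNReal.ofReal_le_ofReal
          have hsum : ∑ k ∈ Finset.Icc 1 (n / 2),
              (n.choose k : ℝ) * (1 - p) ^ (k * (n - k)) ≤ B * ((n:ℝ) ^ (1 - a) + (n:ℝ)⁻¹) := by
            rw [hp]; exact hreal
          -- final real comparison
          have hlog2n : Real.log 2 ≤ Real.log n := Real.log_le_log (by norm_num) (by exact_mod_cast hn)
          have hpow13 : (Real.log 2) ^ 13 ≤ (Real.log n) ^ 13 :=
            pow_le_pow_left₀ hl2.le hlog2n 13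
          have hrpnn : (0:ℝ) ≤ (n:ℝ) ^ (1 - a) := by positivity
          have hkey1 : (n:ℝ) ^ (1 - a) ≤ ((Real.log 2) ^ 13)⁻¹ * T1 := by
            rw [hT1]
            have h3 : (1:ℝ) ≤ ((Real.log 2) ^ 13)⁻¹ * (Real.log n) ^ 13 := by
              rw [inv_mul_eq_div, le_div_iff₀ (by positivity)]
              simpa using hpow13
            nlinarith [mul_le_mul_of_nonneg_right h3 hrpnn]
          have hMB1 : B * ((Real.log 2) ^ 13)⁻¹ ≤ M := by
            rw [hM]; have : (0:ℝ) ≤ (N0:ℝ) := by positivity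
            linarith
          have hMB2 : B ≤ M := by
            rw [hM]; have h1 : (0:ℝ) ≤ (N0:ℝ) := by positivity
            have h2 : 0 < B * ((Real.log 2) ^ 13)⁻¹ := by positivity
            linarith
          calc ∑ k ∈ Finset.Icc 1 (n / 2), (n.choose k : ℝ) * (1 - p) ^ (k * (n - k))
              ≤ B * ((n:ℝ) ^ (1 - a) + (n:ℝ)⁻¹) := hsum
            _ ≤ M * (T1 + T2 + T3) := by
                have e1 : B * (n:ℝ) ^ (1 - a) ≤ M * T1 := by
                  calc B * (n:ℝ) ^ (1 - a) ≤ B * (((Real.log 2) ^ 13)⁻¹ * T1) :=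
                        mul_le_mul_of_nonneg_left hkey1 hBpos.le
                    _ = (B * ((Real.log 2) ^ 13)⁻¹) * T1 := by ring
                    _ ≤ M * T1 := mul_le_mul_of_nonneg_right hMB1 hT1nn
                have e2 : B * (n:ℝ)⁻¹ ≤ M * T2 := by
                  rw [hT2]; exact mul_le_mul_of_nonneg_right hMB2 (by positivity)
                have e3 : (0:ℝ) ≤ M * T3 := mul_nonneg hMpos.le hT3nn.le
                have h4 := add_le_add (add_le_add e1 e2) e3
                calc B * ((n:ℝ) ^ (1 - a) + (n:ℝ)⁻¹)
                    = B * (n:ℝ) ^ (1 - a) + B * (n:ℝ)⁻¹ + 0 := by ring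
                  _ ≤ M * T1 + M * T2 + M * T3 := h4
                  _ = M * (T1 + T2 + T3) := by ring
end
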